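/- Let p > 3 be prime, E : y² = x³ + Ax + B a nonsingular elliptic curve over 𝔽_p, G = (x_G, y_G) ∈ E(𝔽_p), W₀ ∈ E(𝔽_p), and x_n = x(nG ⊕ W₀) for n ≥ 1 with W_n ≠ ±G and W_n, W_{n±1} ≠ 𝒪 for n = 2,…,6. Suppose x₁,…,x₇ are pairwise distinct. Then the vectors v₁ = (x_i² + x_i(x_{i−1}+x_{i+1}))_{i=2..6}, v₂ = (x_{i−1}+x_{i+1})_{i=2..6}, v₃ = (x_i)_{i=2..6}, v₄ = (1,1,1,1,1) in 𝔽_p⁵ are linearly independent over 𝔽_p. -/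

import Mathlib

/-- The elliptic curve `y² = x³ + Ax + B` in affine Weierstrass form. -/
def Ecurve {k : Type*} [CommRing k] (A B : k) : WeierstrassCurve.Affine k :=
  { a₁ := 0, a₂ := 0, a₃ := 0, a₄ := A, a₆ := B }

/-- The x-coordinate of a nonsingular point, with the convention `x(𝒪) = 0`. -/
def xcoord {k : Type*} [Field k] {W : WeierstrassCurve.Affine k} : W.Point → k
  | .zero => 0
  | @WeierstrassCurve.Affine.Point.some _ _ _ x _ _ => x

open WeierstrassCurve.Affine Polynomial

lemma some_eq_some_aux {k : Type*} [Field k] {W : WeierstrassCurve.Affine k}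
    {x1 y1 x2 y2 : k} (h1 : W.Nonsingular x1 y1) (h2 : W.Nonsingular x2 y2)
    (hx : x1 = x2) (hy : y1 = y2) : Point.some _ _ h1 = Point.some _ _ h2 := by
  subst hx; subst hy; rfl

/-- Lemma 1 of the paper: for the elliptic curve congruential generator
`x_n = x(nG ⊕ W₀)` over `𝔽_p` (`p > 3`, nonsingular curve, `Wₙ ≠ ±G` for `n = 2,…,6`,
`Wₙ ≠ 𝒪` for `n = 1,…,7`) with `x₁,…,x₇` pairwise distinct, the four vectors
`v₁ = (xᵢ² + xᵢ(xᵢ₋₁+xᵢ₊₁))ᵢ`, `v₂ = (xᵢ₋₁+xᵢ₊₁)ᵢ`, `v₃ = (xᵢ)ᵢ`, `v₄ = (1,…,1)` in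
`𝔽_p⁵` (`i = 2,…,6`) are linearly independent over `𝔽_p`. -/
theorem stmt7 (p : ℕ) [Fact p.Prime] (hp : 3 < p)
    (A B : ZMod p)
    (hΔ : 4 * A ^ 3 + 27 * B ^ 2 ≠ 0)
    (G W₀ : (Ecurve A B).Point)
    (Wn : ℕ → (Ecurve A B).Point) (hWn : ∀ n, Wn n = n • G + W₀)
    (xs : ℕ → ZMod p) (hxs : ∀ n, xs n = xcoord (Wn n))
    (hG : ∀ n, 2 ≤ n → n ≤ 6 → Wn n ≠ G ∧ Wn n ≠ -G)
    (hO : ∀ n, 1 ≤ n → n ≤ 7 → Wn n ≠ 0)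
    (hdist : ∀ i j, 1 ≤ i → i ≤ 7 → 1 ≤ j → j ≤ 7 → i ≠ j → xs i ≠ xs j) :
    LinearIndependent (ZMod p)
      ![fun i : Fin 5 => xs ((i : ℕ) + 2) ^ 2 +
          xs ((i : ℕ) + 2) * (xs ((i : ℕ) + 1) + xs ((i : ℕ) + 3)),
        fun i : Fin 5 => xs ((i : ℕ) + 1) + xs ((i : ℕ) + 3),
        fun i : Fin 5 => xs ((i : ℕ) + 2),
        fun _ : Fin 5 => (1 : ZMod p)] := by
  have h2ne : (2 : ZMod p) ≠ 0 := by
    intro h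
    have h2 := (CharP.cast_eq_zero_iff (ZMod p) p 2).mp (by exact_mod_cast h)
    have := Nat.le_of_dvd (by norm_num) h2
    omega
  -- G must be a finite point
  rcases G with _ | @⟨xG, yG, hGns⟩
  · exfalso
    apply hdist 1 2 (by norm_num) (by norm_num) (by norm_num) (by norm_num) (by norm_num)
    rw [hxs, hxs, hWn 1, hWn 2, ← Point.zero_def, nsmul_zero, nsmul_zero]
  · have e_yG : yG ^ 2 = xG ^ 3 + A * xG + B := by
      have h := hGns.1
      rw [equation_iff] at h
      simpa [Ecurve] using h
    -- the key relation for n = 2, …, 6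
    have key : ∀ n, 2 ≤ n → n ≤ 6 →
        xs n ≠ xG ∧
        (xs (n - 1) + xs (n + 1) + 2 * (xs n + xG)) * (xs n - xG) ^ 2
          = 2 * (xs n ^ 3 + A * xs n + B) + 2 * yG ^ 2 := by
      intro n h2 h6
      rcases hWne : Wn n with _ | @⟨x, y, hW⟩
      · exact absurd hWne (hO n (by omega) (by omega))
      have e_y : y ^ 2 = x ^ 3 + A * x + B := by
        have h := hW.1
        rw [equation_iff] at h
        simpa [Ecurve] using h
      have hxsn : xs n = x := by rw [hxs, hWne]; rfl
      have hx : xG ≠ x := by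
        rintro rfl
        have hyy : (y - yG) * (y + yG) = 0 := by linear_combination e_y - e_yG
        rcases mul_eq_zero.mp hyy with h' | h'
        · have hy : y = yG := by linear_combination h'
          subst hy
          exact (hG n h2 h6).1 hWne
        · have hy : y = -yG := by linear_combination h'
          subst hy
          apply (hG n h2 h6).2
          rw [hWne, Point.neg_some]
          exact some_eq_some_aux _ _ rfl (by simp [WeierstrassCurve.Affine.negY, Ecurve])
      have hnext : Wn (n + 1) = Point.some _ _ hGns + Wn n := by
        rw [hWn, hWn, succ_nsmul', add_assoc]
      have hprev : Wn (n - 1) = -Point.some _ _ hGns + Wn n := by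
        have hn : n - 1 + 1 = n := by omega
        rw [hWn, hWn]
        conv_rhs => rw [← hn, succ_nsmul']
        abel
      have hxnext : xs (n + 1) = ((yG - y) / (xG - x)) ^ 2 - xG - x := by
        rw [hxs, hnext, hWne, Point.add_of_X_ne hx]
        show (Ecurve A B).addX xG x _ = _
        rw [slope_of_X_ne hx]
        simp [WeierstrassCurve.Affine.addX, Ecurve]
      have hxprev : xs (n - 1) = ((-yG - y) / (xG - x)) ^ 2 - xG - x := by
        rw [hxs, hprev, hWne, Point.neg_some, Point.add_of_X_ne hx]
        show (Ecurve A B).addX xG x _ = _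
        rw [slope_of_X_ne hx]
        simp [WeierstrassCurve.Affine.addX, WeierstrassCurve.Affine.negY, Ecurve]
      have hne : xG - x ≠ 0 := sub_ne_zero.mpr hx
      refine ⟨by rw [hxsn]; exact fun h => hx h.symm, ?_⟩
      rw [hxsn, hxnext, hxprev]
      field_simp
      linear_combination (2 * (xG - x) ^ 2) * e_y
    -- linear independence
    rw [Fintype.linearIndependent_iff]
    intro g hg
    have hcomp : ∀ j : Fin 5,
        g 0 * (xs ((j : ℕ) + 2) ^ 2 + xs ((j : ℕ) + 2) * (xs ((j : ℕ) + 1) + xs ((j : ℕ) + 3)))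
          + g 1 * (xs ((j : ℕ) + 1) + xs ((j : ℕ) + 3))
          + g 2 * xs ((j : ℕ) + 2) + g 3 = 0 := by
      intro j
      have h := congrFun hg j
      simpa [Fin.sum_univ_four, Matrix.cons_val_zero, Matrix.cons_val_one, Matrix.head_cons,
        mul_add, add_assoc] using h
    set c4 : ZMod p := g 0 with hc4def
    set c3 : ZMod p := g 2 with hc3def
    set c2 : ZMod p := g 3 - 2 * xG * g 2 + (2 * A + 3 * xG ^ 2) * g 0 + 2 * xG * g 1 with hc2def
    set c1 : ZMod p := -2 * xG * g 3 + xG ^ 2 * g 2 + 2 * (B + yG ^ 2 - xG ^ 3) * g 0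
      + 2 * (A + xG ^ 2) * g 1 with hc1def
    set c0 : ZMod p := xG ^ 2 * g 3 + 2 * (B + yG ^ 2 - xG ^ 3) * g 1 with hc0def
    set F : Polynomial (ZMod p) :=
      C c0 + C c1 * X + C c2 * X ^ 2 + C c3 * X ^ 3 + C c4 * X ^ 4 with hFdef
    have hdeg : F.natDegree < 5 := by
      have : F.natDegree ≤ 4 := by rw [hFdef]; compute_degree
      omega
    have heval : ∀ j : Fin 5, F.eval (xs ((j : ℕ) + 2)) = 0 := by
      intro j
      have hj2 : 2 ≤ (j : ℕ) + 2 := by omega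
      have hj6 : (j : ℕ) + 2 ≤ 6 := by omega
      obtain ⟨hne, hrel⟩ := key ((j : ℕ) + 2) hj2 hj6
      have h3 := hcomp j
      rw [show (j : ℕ) + 2 - 1 = (j : ℕ) + 1 from by omega,
        show (j : ℕ) + 2 + 1 = (j : ℕ) + 3 from by omega] at hrel
      simp only [hFdef, Polynomial.eval_add, Polynomial.eval_mul, Polynomial.eval_pow,
        Polynomial.eval_C, Polynomial.eval_X]
      linear_combination (xs ((j : ℕ) + 2) - xG) ^ 2 * h3
        - (g 0 * xs ((j : ℕ) + 2) + g 1) * hrel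
    have hinj : Function.Injective (fun j : Fin 5 => xs ((j : ℕ) + 2)) := by
      intro a b hab
      by_contra hne
      exact hdist ((a : ℕ) + 2) ((b : ℕ) + 2) (by omega) (by omega) (by omega) (by omega)
        (by simp only [Ne, Nat.add_right_cancel_iff]; exact fun h => hne (Fin.ext h)) hab
    have hF : F = 0 :=
      Polynomial.eq_zero_of_natDegree_lt_card_of_eval_eq_zero F hinj heval
        (by simpa using hdeg)
    have hco : ∀ k, F.coeff k = 0 := by intro k; rw [hF]; simp
    have h4 : c4 = 0 := by
      have h := hco 4
      simpa [hFdef, Polynomial.coeff_add, Polynomial.coeff_C_mul, Polynomial.coeff_X_pow,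
        Polynomial.coeff_C, Polynomial.coeff_X] using h
    have h3c : c3 = 0 := by
      have h := hco 3
      simpa [hFdef, Polynomial.coeff_add, Polynomial.coeff_C_mul, Polynomial.coeff_X_pow,
        Polynomial.coeff_C, Polynomial.coeff_X] using h
    have h2c : c2 = 0 := by
      have h := hco 2
      simpa [hFdef, Polynomial.coeff_add, Polynomial.coeff_C_mul, Polynomial.coeff_X_pow,
        Polynomial.coeff_C, Polynomial.coeff_X] using h
    have h1c : c1 = 0 := by
      have h := hco 1
      simpa [hFdef, Polynomial.coeff_add, Polynomial.coeff_C_mul, Polynomial.coeff_X_pow,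
        Polynomial.coeff_C, Polynomial.coeff_X] using h
    have h0c : c0 = 0 := by
      have h := hco 0
      simpa [hFdef, Polynomial.coeff_add, Polynomial.coeff_C_mul, Polynomial.coeff_X_pow,
        Polynomial.coeff_C, Polynomial.coeff_X] using h
    have hg0 : g 0 = 0 := h4
    have hg2 : g 2 = 0 := h3c
    rw [hc2def] at h2c
    rw [hc1def] at h1c
    rw [hc0def] at h0c
    rw [hg0, hg2] at h2c
    rw [hg0, hg2] at h1c
    -- h2c : g 3 + 2 xG g1 = 0, h1c : -2 xG g3 + 2 (A + xG²) g1 = 0,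
    -- h0c : xG² g3 + 2 (B + yG² - xG³) g1 = 0
    have hg1 : g 1 = 0 := by
      by_contra hg1
      have e1 : A + 3 * xG ^ 2 = 0 := by
        have h : (2 : ZMod p) * ((A + 3 * xG ^ 2) * g 1) = 0 := by
          linear_combination h1c + 2 * xG * h2c
        exact (mul_eq_zero.mp ((mul_eq_zero.mp h).resolve_left h2ne)).resolve_right hg1
      have hA : A = -3 * xG ^ 2 := by linear_combination e1
      have e2 : B = 2 * xG ^ 3 := by
        have h : (2 : ZMod p) * (2 * ((B - 2 * xG ^ 3) * g 1)) = 0 := by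
          linear_combination h0c - xG ^ 2 * h2c - 2 * g 1 * e_yG - 2 * xG * g 1 * e1
        have h' := (mul_eq_zero.mp ((mul_eq_zero.mp h).resolve_left h2ne)).resolve_left h2ne
        have h'' := (mul_eq_zero.mp h').resolve_right hg1
        linear_combination h''
      exact hΔ (by rw [hA, e2]; ring)
    have hg3 : g 3 = 0 := by linear_combination h2c - 2 * xG * hg1
    intro i
    fin_cases i <;> assumption
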